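/- Let Y be the topological sum of ω₁ many convergent sequences with their limits, and let S_{ω₁} be the quotient obtained by identifying all limit points to a single point ∞. Then S_{ω₁} does not have an ω^ω-base at ∞: there is no neighborhood base {U_α : α ∈ ω^ω} at ∞ with U_β ⊆ U_α whenever α ≤ β in the pointwise order. -/

import Mathlib

open Set Filter Topology

/-- An `ω^ω`-base of neighborhoods at a point `y` of a space with topology `t`. -/
def HasOmegaOmegaBaseAt {Y : Type*} (t : TopologicalSpace Y) (y : Y) : Prop :=
  ∃ U : (ℕ → ℕ) → Set Y, (∀ α, U α ∈ @nhds Y t y) ∧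
    (∀ α β : ℕ → ℕ, α ≤ β → U β ⊆ U α) ∧
    ∀ V ∈ @nhds Y t y, ∃ α, U α ⊆ V

/-- The fan `S_κ` over an index type `ι`: `none` is the point `∞`, and `some (a, n)` is
the `n`-th point of the `a`-th convergent sequence. All points other than `∞` are
isolated, and the basic neighborhoods of `∞` are the sets containing `∞` together with a
tail of every sequence. -/
def fanTop (ι : Type*) : TopologicalSpace (Option (ι × ℕ)) :=
  TopologicalSpace.generateFrom
    ({S | ∃ p : ι × ℕ, S = {Option.some p}} ∪
     {S | ∃ f : ι → ℕ, S = insert Option.none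
        {q : Option (ι × ℕ) | ∃ (a : ι) (n : ℕ), f a ≤ n ∧ q = Option.some (a, n)}})

/-! ### Auxiliary combinatorics: an uncountable family in `ω^ω` has an infinite
pointwise-bounded subfamily. -/

section Comb
open Classical

variable {ι : Type*}

/-- Recursive shrinking sets: `fanAuxS α k` is an uncountable set on which `fun x => α x j`
is constant for all `j < k`. -/
noncomputable def fanAuxS (α : ι → ℕ → ℕ) : ℕ → Set ι
  | 0 => Set.univ
  | k+1 =>
      if h : ∃ m, ¬ ({x ∈ fanAuxS α k | α x k = m} : Set ι).Countable then
        {x ∈ fanAuxS α k | α x k = h.choose}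
      else ∅

/-- The constant value of `fun x => α x k` on `fanAuxS α (k+1)`. -/
noncomputable def fanAuxM (α : ι → ℕ → ℕ) (k : ℕ) : ℕ :=
  if h : ∃ m, ¬ ({x ∈ fanAuxS α k | α x k = m} : Set ι).Countable then h.choose else 0

theorem fanAuxS_succ_subset (α : ι → ℕ → ℕ) (k : ℕ) : fanAuxS α (k+1) ⊆ fanAuxS α k := by
  rw [fanAuxS]
  split
  · exact Set.sep_subset _ _
  · exact Set.empty_subset _

theorem fanAuxS_subset (α : ι → ℕ → ℕ) {n k : ℕ} (h : n ≤ k) : fanAuxS α k ⊆ fanAuxS α n := by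
  induction k with
  | zero => simp_all
  | succ k ih =>
    rcases Nat.lt_or_ge n (k+1) with h' | h'
    · exact (fanAuxS_succ_subset α k).trans (ih (Nat.lt_succ_iff.mp h'))
    · have : n = k+1 := le_antisymm h h'
      subst this; rfl

theorem fanAuxS_not_countable (α : ι → ℕ → ℕ) (hι : ¬ (Set.univ : Set ι).Countable) :
    ∀ k, ¬ (fanAuxS α k).Countable := by
  intro k
  induction k with
  | zero => exact hι
  | succ k ih =>
    have h : ∃ m, ¬ ({x ∈ fanAuxS α k | α x k = m} : Set ι).Countable := by
      by_contra hc
      push_neg at hc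
      have hsub : fanAuxS α k ⊆ ⋃ m : ℕ, {x ∈ fanAuxS α k | α x k = m} := fun x hx =>
        Set.mem_iUnion.2 ⟨α x k, hx, rfl⟩
      exact ih ((Set.countable_iUnion hc).mono hsub)
    rw [fanAuxS, dif_pos h]
    exact h.choose_spec

theorem fanAuxS_const (α : ι → ℕ → ℕ) {k : ℕ} {x : ι} (hx : x ∈ fanAuxS α (k+1)) :
    α x k = fanAuxM α k := by
  rw [fanAuxS] at hx
  rw [fanAuxM]
  split at hx
  · rename_i h
    rw [dif_pos h]
    exact hx.2
  · exact absurd hx (Set.notMem_empty x)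

/-- The list of first `k` chosen points. -/
noncomputable def fanAuxL (α : ι → ℕ → ℕ) [Nonempty ι] : ℕ → List ι
  | 0 => []
  | k+1 => fanAuxL α k ++
      [if h : (fanAuxS α k \ {x | x ∈ fanAuxL α k}).Nonempty then h.choose
       else Classical.arbitrary ι]

/-- The chosen injective sequence. -/
noncomputable def fanAuxA (α : ι → ℕ → ℕ) [Nonempty ι] (k : ℕ) : ι :=
  if h : (fanAuxS α k \ {x | x ∈ fanAuxL α k}).Nonempty then h.choose
  else Classical.arbitrary ι

theorem fanAuxA_spec (α : ι → ℕ → ℕ) [Nonempty ι]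
    (hι : ¬ (Set.univ : Set ι).Countable) (k : ℕ) :
    fanAuxA α k ∈ fanAuxS α k ∧ fanAuxA α k ∉ fanAuxL α k := by
  have h : (fanAuxS α k \ {x | x ∈ fanAuxL α k}).Nonempty := by
    by_contra hne
    rw [Set.not_nonempty_iff_eq_empty, Set.diff_eq_empty] at hne
    exact fanAuxS_not_countable α hι k
      (((fanAuxL α k).finite_toSet).countable.mono hne)
  rw [fanAuxA, dif_pos h]
  exact h.choose_spec

theorem fanAuxL_succ (α : ι → ℕ → ℕ) [Nonempty ι] (k : ℕ) :
    fanAuxL α (k+1) = fanAuxL α k ++ [fanAuxA α k] := rfl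

theorem fanAuxA_mem_L (α : ι → ℕ → ℕ) [Nonempty ι] {j k : ℕ} (h : j < k) :
    fanAuxA α j ∈ fanAuxL α k := by
  induction k with
  | zero => omega
  | succ k ih =>
    rw [fanAuxL_succ, List.mem_append]
    rcases Nat.lt_or_ge j k with h' | h'
    · exact Or.inl (ih h')
    · have : j = k := by omega
      subst this
      exact Or.inr (List.mem_singleton.mpr rfl)

theorem fanAuxA_injective (α : ι → ℕ → ℕ) [Nonempty ι]
    (hι : ¬ (Set.univ : Set ι).Countable) : Function.Injective (fanAuxA α) := by
  intro j k hjk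
  by_contra hne
  wlog h : j < k generalizing j k
  · exact this hjk.symm (Ne.symm hne) (by omega)
  · exact (fanAuxA_spec α hι k).2 (hjk ▸ fanAuxA_mem_L α h)

/-- Key combinatorial fact: an uncountable family in `ω^ω` has an infinite subfamily
bounded by a single element. -/
theorem exists_infinite_bounded (α : ι → ℕ → ℕ)
    (hι : ¬ (Set.univ : Set ι).Countable) :
    ∃ (a : ℕ → ι) (β : ℕ → ℕ), Function.Injective a ∧ ∀ k, α (a k) ≤ β := by
  have : Nonempty ι := by
    by_contra h
    rw [not_nonempty_iff] at h
    exact hι (Set.countable_univ)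
  refine ⟨fanAuxA α, fun n => max (fanAuxM α n)
    ((Finset.range (n+1)).sup fun k => α (fanAuxA α k) n), fanAuxA_injective α hι, ?_⟩
  intro k n
  rcases Nat.lt_or_ge n k with h | h
  · have hmem : fanAuxA α k ∈ fanAuxS α (n+1) :=
      fanAuxS_subset α h (fanAuxA_spec α hι k).1
    rw [fanAuxS_const α hmem]
    exact le_max_left _ _
  · exact le_trans (Finset.le_sup (f := fun k => α (fanAuxA α k) n)
      (Finset.mem_range.mpr (by omega))) (le_max_right _ _)

end Comb

/-! ### An `ω₁`-scale on `ι`. -/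

theorem fan_exists_scale {ι : Type*} (hι : Cardinal.mk ι = Cardinal.aleph 1) :
    ∃ g : ι → ι → ℕ, ∀ a : ℕ → ι, Function.Injective a →
      ∃ b : ι, ∀ N : ℕ, ∃ k : ℕ, N < g (a k) b := by
  classical
  obtain ⟨φ⟩ : Nonempty (ι ≃ (Cardinal.aleph 1).ord.ToType) :=
    Cardinal.eq.mp (by rw [hι, Cardinal.mk_ord_toType])
  have hseg : ∀ b : (Cardinal.aleph 1).ord.ToType, (Set.Iio b).Countable := fun b => by
    rw [Cardinal.countable_iff_lt_aleph_one]
    exact Cardinal.mk_Iio_ord_toType b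
  have hcnt : ∀ b : (Cardinal.aleph 1).ord.ToType,
      ∃ e : (Set.Iio b) → ℕ, Function.Injective e := fun b =>
    have := (hseg b).to_subtype
    Countable.exists_injective_nat _
  choose e he using hcnt
  refine ⟨fun a b => if h : φ a < φ b then e (φ b) ⟨φ a, h⟩ else 0, ?_⟩
  intro a ha
  haveI : IsWellOrder (Cardinal.aleph 1).ord.ToType (· < ·) := isWellOrder_lt
  have hbdd : Bounded (· < ·) (Set.range (φ ∘ a)) := by
    refine not_isCofinal_iff.mp fun hcof => ?_
    have hle := Order.cof_le hcof
    rw [Ordinal.cof_toType, Cardinal.isRegular_aleph_one.cof_eq] at hle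
    refine absurd hle (not_le.mpr ?_)
    have hc : (Set.range (φ ∘ a)).Countable := Set.countable_range _
    haveI := hc.to_subtype
    exact lt_of_le_of_lt Cardinal.mk_le_aleph0 Cardinal.aleph0_lt_aleph_one
  obtain ⟨b', hb'⟩ := hbdd
  refine ⟨φ.symm b', ?_⟩
  have hlt : ∀ k, φ (a k) < φ (φ.symm b') := fun k => by
    rw [Equiv.apply_symm_apply]
    exact hb' _ (Set.mem_range_self k)
  intro N
  by_contra hN
  push_neg at hN
  have hmaps : ∀ k ∈ Finset.range (N + 2),
      (fun k => if h : φ (a k) < φ (φ.symm b') then e (φ (φ.symm b')) ⟨φ (a k), h⟩ else 0) k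
        ∈ Finset.range (N + 1) := by
    intro k _
    simp only
    exact Finset.mem_range.mpr (Nat.lt_succ_of_le (hN k))
  obtain ⟨i, -, j, -, hij, hval⟩ :=
    Finset.exists_ne_map_eq_of_card_lt_of_maps_to
      (by simp : (Finset.range (N+1)).card < (Finset.range (N+2)).card) hmaps
  rw [dif_pos (hlt i), dif_pos (hlt j)] at hval
  have h2 : (⟨φ (a i), hlt i⟩ : Set.Iio (φ (φ.symm b'))) = ⟨φ (a j), hlt j⟩ :=
    he (φ (φ.symm b')) hval
  exact hij (ha (φ.injective (Subtype.ext_iff.mp h2)))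

/-! ### Neighborhoods of `∞` in the fan. -/

/-- Basic neighborhood of `∞` in the fan. -/
def fanV {ι : Type*} (f : ι → ℕ) : Set (Option (ι × ℕ)) :=
  insert Option.none
    {q : Option (ι × ℕ) | ∃ (a : ι) (n : ℕ), f a ≤ n ∧ q = Option.some (a, n)}

theorem fanV_mono {ι : Type*} {f g : ι → ℕ} (h : f ≤ g) : fanV g ⊆ fanV f := by
  rintro q (rfl | ⟨a, n, hn, rfl⟩)
  · exact Set.mem_insert _ _
  · exact Set.mem_insert_of_mem _ ⟨a, n, le_trans (h a) hn, rfl⟩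

theorem fanV_mem_nhds {ι : Type*} (f : ι → ℕ) :
    fanV f ∈ @nhds _ (fanTop ι) Option.none := by
  letI := fanTop ι
  have hopen : IsOpen (fanV f) :=
    TopologicalSpace.GenerateOpen.basic _ (Or.inr ⟨f, rfl⟩)
  exact hopen.mem_nhds (Set.mem_insert _ _)

theorem exists_fanV_subset {ι : Type*} {U : Set (Option (ι × ℕ))}
    (hU : U ∈ @nhds _ (fanTop ι) Option.none) : ∃ f : ι → ℕ, fanV f ⊆ U := by
  letI := fanTop ι
  rw [show (fanTop ι) = TopologicalSpace.generateFrom _ from rfl] at hU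
  rw [TopologicalSpace.nhds_generateFrom] at hU
  have hdir : DirectedOn ((𝓟 : Set (Option (ι × ℕ)) → Filter (Option (ι × ℕ))) ⁻¹'o (· ≥ ·))
      {s | Option.none ∈ s ∧ s ∈
        ({S | ∃ p : ι × ℕ, S = {Option.some p}} ∪
         {S | ∃ f : ι → ℕ, S = insert Option.none
            {q : Option (ι × ℕ) | ∃ (a : ι) (n : ℕ), f a ≤ n ∧ q = Option.some (a, n)}})} := by
    rintro s₁ ⟨hn₁, hs₁⟩ s₂ ⟨hn₂, hs₂⟩
    have hf₁ : ∃ f : ι → ℕ, s₁ = fanV f := by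
      rcases hs₁ with ⟨p, rfl⟩ | ⟨f, rfl⟩
      · simp at hn₁
      · exact ⟨f, rfl⟩
    have hf₂ : ∃ f : ι → ℕ, s₂ = fanV f := by
      rcases hs₂ with ⟨p, rfl⟩ | ⟨f, rfl⟩
      · simp at hn₂
      · exact ⟨f, rfl⟩
    obtain ⟨f₁, rfl⟩ := hf₁
    obtain ⟨f₂, rfl⟩ := hf₂
    refine ⟨fanV (f₁ ⊔ f₂), ⟨Set.mem_insert _ _, Or.inr ⟨f₁ ⊔ f₂, rfl⟩⟩, ?_, ?_⟩
    · exact Filter.principal_mono.mpr (fanV_mono le_sup_left)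
    · exact Filter.principal_mono.mpr (fanV_mono le_sup_right)
  have hne : ({s | Option.none ∈ s ∧ s ∈
        ({S | ∃ p : ι × ℕ, S = {Option.some p}} ∪
         {S | ∃ f : ι → ℕ, S = insert Option.none
            {q : Option (ι × ℕ) | ∃ (a : ι) (n : ℕ), f a ≤ n ∧ q = Option.some (a, n)}})} :
      Set (Set (Option (ι × ℕ)))).Nonempty :=
    ⟨fanV (fun _ => 0), Set.mem_insert _ _, Or.inr ⟨fun _ => 0, rfl⟩⟩
  rw [Filter.mem_biInf_of_directed hdir hne] at hU
  obtain ⟨s, ⟨hns, hs⟩, hsU⟩ := hU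
  rcases hs with ⟨p, rfl⟩ | ⟨f, rfl⟩
  · simp at hns
  · exact ⟨f, fun q hq => hsU hq⟩

/-- `S_{ω₁}` has no `ω^ω`-base at the point `∞`. -/
theorem fan_omega1_no_omegaOmegaBase_at_infty {ι : Type*}
    (hι : Cardinal.mk ι = Cardinal.aleph 1) :
    ¬ HasOmegaOmegaBaseAt (fanTop ι) (Option.none : Option (ι × ℕ)) := by
  rintro ⟨U, hnhds, hmono, hbase⟩
  have huncount : ¬ (Set.univ : Set ι).Countable := by
    rw [Cardinal.countable_iff_lt_aleph_one, Cardinal.mk_univ, hι]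
    exact lt_irrefl _
  obtain ⟨g, hg⟩ := fan_exists_scale hι
  have hch : ∀ a : ι, ∃ α : ℕ → ℕ, U α ⊆ fanV (g a) := fun a =>
    hbase _ (fanV_mem_nhds (g a))
  choose α hα using hch
  obtain ⟨a, β, ha_inj, hbound⟩ := exists_infinite_bounded α huncount
  obtain ⟨f, hf⟩ := exists_fanV_subset (hnhds β)
  obtain ⟨b, hb⟩ := hg a ha_inj
  obtain ⟨k, hk⟩ := hb (f b)
  have hpt : (Option.some (b, f b)) ∈ fanV (g (a k)) := by
    apply hα (a k)
    apply hmono _ _ (hbound k)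
    apply hf
    exact Set.mem_insert_of_mem _ ⟨b, f b, le_rfl, rfl⟩
  rcases hpt with h | ⟨a', n, hn, he⟩
  · simp at h
  · obtain ⟨rfl, rfl⟩ : a' = b ∧ n = f b := by
      have h' := Option.some.inj he
      exact ⟨(congrArg Prod.fst h').symm, (congrArg Prod.snd h').symm⟩
    omega
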